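/- Let x_s, x_d ∈ ℝ² with midpoint w and ‖x_s − x_d‖ = 2d, d > 0. Let ψ ≥ 0, τ > 0, and t be reals with d < t, ψ + d ≤ t ≤ √(τ² + d²). Then the two-dimensional Lebesgue measure of the set {x ∈ ℝ² : ψ ≤ ‖x − w‖ ≤ τ and max(‖x_s − x‖, ‖x − x_d‖) > t} equals π(τ² − t²) + 2d√(t² − d²) + 2t²·arctan(d/√(t² − d²)). -/

import Mathlib

open Real MeasureTheory Set

private lemma integral_sqrt_aux (t d : ℝ) (hd : 0 < d) (hdt : d < t) :
    ∫ u in d..t, Real.sqrt (t^2 - u^2)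
      = (t^2 * (π/2) - d * Real.sqrt (t^2 - d^2) - t^2 * Real.arcsin (d/t))/2 := by
  have ht : 0 < t := hd.trans hdt
  set F : ℝ → ℝ := fun u => (u * Real.sqrt (t^2 - u^2) + t^2 * Real.arcsin (u/t))/2 with hF
  have hcont : ContinuousOn F (Icc d t) := by
    apply Continuous.continuousOn
    exact (((continuous_id.mul (Real.continuous_sqrt.comp (by fun_prop))).add
      (continuous_const.mul (Real.continuous_arcsin.comp (continuous_id.div_const t)))).div_const 2)
  have hderiv : ∀ u ∈ Ioo d t, HasDerivAt F (Real.sqrt (t^2 - u^2)) u := by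
    intro u hu
    have hu0 : 0 < u := hd.trans hu.1
    have h1 : 0 < t^2 - u^2 := by nlinarith [hu.2, hu0]
    have hs : 0 < Real.sqrt (t^2 - u^2) := Real.sqrt_pos.mpr h1
    have hinner : HasDerivAt (fun u : ℝ => t^2 - u^2) (-(2*u)) u := by
      simpa using (hasDerivAt_pow 2 u).const_sub (t^2)
    have hsqrt : HasDerivAt (fun u : ℝ => Real.sqrt (t^2 - u^2))
        (1 / (2 * Real.sqrt (t^2 - u^2)) * (-(2*u))) u :=
      (Real.hasDerivAt_sqrt h1.ne').comp u hinner
    have hmul : HasDerivAt (fun u : ℝ => u * Real.sqrt (t^2 - u^2))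
        (1 * Real.sqrt (t^2 - u^2) + u * (1 / (2 * Real.sqrt (t^2 - u^2)) * (-(2*u)))) u :=
      (hasDerivAt_id u).mul hsqrt
    have hdivt : HasDerivAt (fun u : ℝ => u / t) (1/t) u := by
      simpa using (hasDerivAt_id u).div_const t
    have harcsin : HasDerivAt (fun u : ℝ => Real.arcsin (u/t))
        (1 / Real.sqrt (1 - (u/t)^2) * (1/t)) u := by
      have h₁ : u/t ≠ -1 := by
        have : 0 < u/t := div_pos hu0 ht
        linarith
      have h₂ : u/t ≠ 1 := by
        have : u/t < 1 := (div_lt_one ht).mpr hu.2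
        linarith
      exact (Real.hasDerivAt_arcsin h₁ h₂).comp u hdivt
    have hsq : Real.sqrt (1 - (u/t)^2) = Real.sqrt (t^2 - u^2) / t := by
      rw [show (1 - (u/t)^2) = (t^2 - u^2)/t^2 by field_simp,
        Real.sqrt_div h1.le, Real.sqrt_sq ht.le]
    have hcomb := (hmul.add ((harcsin).const_mul (t^2))).div_const 2
    refine hcomb.congr_deriv (Eq.symm ?_)
    rw [hsq]
    have h2 : Real.sqrt (t^2 - u^2) ^ 2 = t^2 - u^2 := Real.sq_sqrt h1.le
    field_simp
    linear_combination h2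
  have hint : IntervalIntegrable (fun u => Real.sqrt (t^2 - u^2)) volume d t := by
    apply Continuous.intervalIntegrable
    fun_prop
  rw [intervalIntegral.integral_eq_sub_of_hasDeriv_right_of_le hdt.le hcont
    (fun x hx => (hderiv x hx).hasDerivWithinAt) hint]
  rw [hF]
  simp only
  rw [show t^2 - t^2 = 0 by ring, Real.sqrt_zero, div_self ht.ne', Real.arcsin_one]
  ring

private lemma slice_volume (c : ℝ) :
    volume {y : ℝ | y^2 ≤ c} = ENNReal.ofReal (2 * Real.sqrt c) := by
  rcases le_or_gt 0 c with hc | hc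
  · have : {y : ℝ | y^2 ≤ c} = Icc (-Real.sqrt c) (Real.sqrt c) := by
      ext y
      simp only [mem_setOf_eq, mem_Icc, ← abs_le]
      constructor
      · exact fun h => Real.abs_le_sqrt h
      · intro h
        calc y^2 = |y|^2 := (sq_abs y).symm
        _ ≤ Real.sqrt c ^ 2 := by
            exact pow_le_pow_left₀ (abs_nonneg y) h 2
        _ = c := Real.sq_sqrt hc
    rw [this, Real.volume_Icc]
    congr 1
    ring
  · have h0 : {y : ℝ | y^2 ≤ c} = ∅ := by
      ext y; simp only [mem_setOf_eq, mem_empty_iff_false, iff_false, not_le]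
      exact lt_of_lt_of_le hc (sq_nonneg y)
    rw [h0, measure_empty, Real.sqrt_eq_zero_of_nonpos hc.le, mul_zero, ENNReal.ofReal_zero]

private lemma lens_volume_plane (d t : ℝ) (hd : 0 < d) (hdt : d < t) :
    volume {q : ℝ × ℝ | (q.1 - d)^2 + q.2^2 ≤ t^2 ∧ (q.1 + d)^2 + q.2^2 ≤ t^2}
      = ENNReal.ofReal (π * t^2 - 2*d*Real.sqrt (t^2 - d^2) - 2*t^2*Real.arcsin (d/t)) := by
  have ht : 0 < t := hd.trans hdt
  have hB : MeasurableSet {q : ℝ × ℝ | (q.1 - d)^2 + q.2^2 ≤ t^2 ∧ (q.1 + d)^2 + q.2^2 ≤ t^2} := by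
    have : {q : ℝ × ℝ | (q.1 - d)^2 + q.2^2 ≤ t^2 ∧ (q.1 + d)^2 + q.2^2 ≤ t^2}
        = {q : ℝ × ℝ | (q.1 - d)^2 + q.2^2 ≤ t^2} ∩ {q : ℝ × ℝ | (q.1 + d)^2 + q.2^2 ≤ t^2} := rfl
    rw [this]
    apply MeasurableSet.inter <;>
      exact measurableSet_le (by fun_prop) measurable_const
  rw [Measure.volume_eq_prod, Measure.prod_apply hB]
  have hslice : ∀ x : ℝ, Prod.mk x ⁻¹' {q : ℝ × ℝ | (q.1 - d)^2 + q.2^2 ≤ t^2 ∧ (q.1 + d)^2 + q.2^2 ≤ t^2}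
      = {y : ℝ | y^2 ≤ t^2 - (|x| + d)^2} := by
    intro x
    ext y
    simp only [mem_preimage, mem_setOf_eq]
    rcases abs_cases x with ⟨h1, h2⟩ | ⟨h1, h2⟩ <;>
      constructor <;> intro h <;>
      first
      | (constructor <;> nlinarith [h, h1, hd.le])
      | nlinarith [h.1, h.2, h1, hd.le]
  simp_rw [hslice, slice_volume]
  set f : ℝ → ℝ := fun x => 2 * Real.sqrt (t^2 - (|x| + d)^2) with hf
  have hf_cont : Continuous f := by
    apply continuous_const.mul
    exact Real.continuous_sqrt.comp (by fun_prop)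
  have hf_nonneg : ∀ x, 0 ≤ f x := fun x => by positivity
  have hf_supp : ∀ x, x ∉ Icc (-(t - d)) (t - d) → f x = 0 := by
    intro x hx
    have : t - d < |x| := by
      rcases abs_cases x with ⟨h1, _⟩ | ⟨h1, _⟩ <;> simp only [mem_Icc, not_and_or, not_le] at hx <;>
        rcases hx with h | h <;> linarith
    have : t^2 - (|x| + d)^2 < 0 := by nlinarith [abs_nonneg x]
    simp [hf, Real.sqrt_eq_zero_of_nonpos this.le]
  have hf_int : Integrable f := by
    apply Continuous.integrable_of_hasCompactSupport hf_cont
    exact HasCompactSupport.intro isCompact_Icc hf_supp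
  rw [← ofReal_integral_eq_lintegral_ofReal hf_int (Filter.Eventually.of_forall hf_nonneg)]
  congr 1
  have key : ∫ x, f x = 4 * ∫ u in d..t, Real.sqrt (t^2 - u^2) := by
    have h1 : ∫ x, f x = 2 * ∫ x, Real.sqrt (t^2 - (|x| + d)^2) := integral_const_mul 2 _
    have h2 : ∫ x : ℝ, Real.sqrt (t^2 - (|x| + d)^2)
        = 2 * ∫ x in Ioi (0:ℝ), Real.sqrt (t^2 - (x + d)^2) :=
      integral_comp_abs (f := fun x => Real.sqrt (t^2 - (x + d)^2))
    have h3 : ∫ x in Ioi (0:ℝ), Real.sqrt (t^2 - (x + d)^2)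
        = ∫ x in Ioc (0:ℝ) (t - d), Real.sqrt (t^2 - (x + d)^2) := by
      apply setIntegral_eq_of_subset_of_ae_diff_eq_zero measurableSet_Ioi.nullMeasurableSet
      · exact fun x hx => hx.1
      · apply Filter.Eventually.of_forall
        intro x hx
        have hx1 : 0 < x := hx.1
        have hx2 : t - d < x := by
          simp only [mem_diff, mem_Ioi, mem_Ioc, not_and_or, not_le] at hx
          rcases hx.2 with h | h
          · linarith
          · exact h
        have : t^2 - (x + d)^2 < 0 := by nlinarith
        exact Real.sqrt_eq_zero_of_nonpos this.le
    have h4 : ∫ x in Ioc (0:ℝ) (t - d), Real.sqrt (t^2 - (x + d)^2)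
        = ∫ x in (0:ℝ)..(t - d), Real.sqrt (t^2 - (x + d)^2) :=
      (intervalIntegral.integral_of_le (by linarith)).symm
    have h5 : ∫ x in (0:ℝ)..(t - d), Real.sqrt (t^2 - (x + d)^2)
        = ∫ u in d..t, Real.sqrt (t^2 - u^2) := by
      have := intervalIntegral.integral_comp_add_right (a := (0:ℝ)) (b := t - d)
        (f := fun u => Real.sqrt (t^2 - u^2)) d
      simpa using this
    rw [h1, h2, h3, h4, h5]; ring
  rw [key, integral_sqrt_aux t d hd hdt]
  ring

private lemma lens_volume_euclidean (d t : ℝ) (hd : 0 < d) (hdt : d < t)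
    (e : EuclideanSpace ℝ (Fin 2)) (he0 : e 0 = d) (he1 : e 1 = 0) :
    volume (Metric.closedBall e t ∩ Metric.closedBall (-e) t)
      = ENNReal.ofReal (π * t^2 - 2*d*Real.sqrt (t^2 - d^2) - 2*t^2*Real.arcsin (d/t)) := by
  rw [← lens_volume_plane d t hd hdt]
  have hmp : MeasurePreserving
      ((MeasurableEquiv.finTwoArrow (α := ℝ)) ∘ (MeasurableEquiv.toLp 2 (Fin 2 → ℝ)).symm)
      volume volume :=
    (volume_preserving_finTwoArrow ℝ).comp (EuclideanSpace.volume_preserving_symm_measurableEquiv_toLp (Fin 2))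
  have hmeas : MeasurableSet {q : ℝ × ℝ | (q.1 - d)^2 + q.2^2 ≤ t^2 ∧ (q.1 + d)^2 + q.2^2 ≤ t^2} := by
    have : {q : ℝ × ℝ | (q.1 - d)^2 + q.2^2 ≤ t^2 ∧ (q.1 + d)^2 + q.2^2 ≤ t^2}
        = {q : ℝ × ℝ | (q.1 - d)^2 + q.2^2 ≤ t^2} ∩ {q : ℝ × ℝ | (q.1 + d)^2 + q.2^2 ≤ t^2} := rfl
    rw [this]
    apply MeasurableSet.inter <;>
      exact measurableSet_le (by fun_prop) measurable_const
  rw [← hmp.measure_preimage hmeas.nullMeasurableSet]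
  congr 1
  ext y
  simp only [mem_inter_iff, Metric.mem_closedBall, mem_preimage, Function.comp_apply,
    mem_setOf_eq, MeasurableEquiv.finTwoArrow_apply, MeasurableEquiv.toLp_symm_apply]
  have hdist : ∀ z : EuclideanSpace ℝ (Fin 2),
      dist y z ≤ t ↔ (y 0 - z 0)^2 + (y 1 - z 1)^2 ≤ t^2 := by
    intro z
    rw [EuclideanSpace.dist_eq, Fin.sum_univ_two]
    constructor
    · intro h
      have h2 := Real.sq_sqrt (by positivity : (0:ℝ) ≤ (dist (y 0) (z 0))^2 + (dist (y 1) (z 1))^2)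
      have := pow_le_pow_left₀ (Real.sqrt_nonneg _) h 2
      rw [h2] at this
      simpa [Real.dist_eq, sq_abs] using this
    · intro h
      have : Real.sqrt (dist (y 0) (z 0) ^ 2 + dist (y 1) (z 1) ^ 2) ≤ Real.sqrt (t^2) := by
        apply Real.sqrt_le_sqrt
        simpa [Real.dist_eq, sq_abs] using h
      rwa [Real.sqrt_sq (hd.trans hdt).le] at this
  rw [hdist e, hdist (-e)]
  have hne0 : (-e) 0 = -d := by simp [he0]
  have hne1 : (-e) 1 = 0 := by simp [he1]
  rw [he0, he1, hne0, hne1]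
  constructor <;> rintro ⟨h1, h2⟩ <;> constructor <;> nlinarith [h1, h2]

set_option maxHeartbeats 1000000 in
/-- Measure of the portion of the annulus `D(ψ, τ) = {x : ψ ≤ ‖x − w‖ ≤ τ}` where the
relay selection function exceeds `t`: for `ψ ≥ 0`, `τ > 0`, `d < t`, `ψ + d ≤ t` and
`t ≤ √(τ² + d²)`, its two-dimensional Lebesgue measure equals
`π(τ² − t²) + 2d√(t² − d²) + 2t² arctan (d / √(t² − d²))`. -/
theorem annulus_exceedance_measure (xs xd w : EuclideanSpace ℝ (Fin 2)) (d : ℝ)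
    (hw : w = midpoint ℝ xs xd) (hd : d = ‖xs - w‖) (hdpos : 0 < d)
    (ψ τ t : ℝ) (hψ : 0 ≤ ψ) (hτ : 0 < τ) (hdt : d < t)
    (ht₁ : ψ + d ≤ t) (ht₂ : t ≤ Real.sqrt (τ ^ 2 + d ^ 2)) :
    volume {x : EuclideanSpace ℝ (Fin 2) |
        ψ ≤ ‖x - w‖ ∧ ‖x - w‖ ≤ τ ∧ t < max ‖xs - x‖ ‖x - xd‖}
      = ENNReal.ofReal (π * (τ ^ 2 - t ^ 2) + 2 * d * Real.sqrt (t ^ 2 - d ^ 2)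
          + 2 * t ^ 2 * Real.arctan (d / Real.sqrt (t ^ 2 - d ^ 2))) := by
  have ht : (0:ℝ) < t := hdpos.trans hdt
  -- basic facts
  have hxdw : xd - w = -(xs - w) := by
    rw [hw, midpoint_eq_smul_add, invOf_eq_inv]
    module
  -- the model point e on the positive first axis
  set e : EuclideanSpace ℝ (Fin 2) := (d : ℝ) • (EuclideanSpace.single (0 : Fin 2) (1:ℝ)) with hedef
  have he : ‖e‖ = d := by
    rw [hedef, norm_smul, EuclideanSpace.norm_single]
    simp [abs_of_pos hdpos]
  have he0 : e 0 = d := by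
    simp [hedef, EuclideanSpace.single_apply]
  have he1 : e 1 = 0 := by
    simp [hedef, EuclideanSpace.single_apply]
  have hnorm_ve : ‖xs - w‖ = ‖e‖ := by rw [he, ← hd]
  -- the reflection sending xs - w to e
  set R := Submodule.reflection (ℝ ∙ ((xs - w) - e))ᗮ with hRdef
  have hR : R (xs - w) = e := Submodule.reflection_sub hnorm_ve
  -- the measure preserving map
  have hmp : MeasurePreserving (fun x : EuclideanSpace ℝ (Fin 2) => R (x - w))
      volume volume :=
    (R.measurePreserving).comp (measurePreserving_sub_right volume w)
  -- target set in model coordinates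
  set S : Set (EuclideanSpace ℝ (Fin 2)) :=
    Metric.closedBall 0 τ \ (Metric.closedBall e t ∩ Metric.closedBall (-e) t) with hSdef
  have hSmeas : MeasurableSet S :=
    Metric.isClosed_closedBall.measurableSet.diff
      (Metric.isClosed_closedBall.measurableSet.inter Metric.isClosed_closedBall.measurableSet)
  -- identify the set in the statement as a preimage
  have hset : {x : EuclideanSpace ℝ (Fin 2) |
      ψ ≤ ‖x - w‖ ∧ ‖x - w‖ ≤ τ ∧ t < max ‖xs - x‖ ‖x - xd‖}
      = (fun x : EuclideanSpace ℝ (Fin 2) => R (x - w)) ⁻¹' S := by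
    ext x
    have hn : ‖R (x - w)‖ = ‖x - w‖ := R.norm_map _
    have ha : dist (R (x - w)) e = ‖xs - x‖ := by
      rw [dist_eq_norm, ← hR, ← map_sub, R.norm_map]
      rw [show x - w - (xs - w) = x - xs by abel, norm_sub_rev]
    have hb : dist (R (x - w)) (-e) = ‖x - xd‖ := by
      rw [dist_eq_norm, ← hR, ← map_neg, ← map_sub, R.norm_map]
      rw [show x - w - -(xs - w) = x - (w + -(xs -w)) by abel]
      congr 2
      rw [← hxdw]; abel
    simp only [mem_setOf_eq, mem_preimage, hSdef, mem_diff, Metric.mem_closedBall,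
      mem_inter_iff, dist_zero_right, hn, ha, hb, not_and_or, not_le, ← lt_max_iff]
    constructor
    · rintro ⟨_, h2, h3⟩
      exact ⟨h2, by simpa [lt_max_iff] using h3⟩
    · rintro ⟨h1, h2⟩
      have h3 : t < max ‖xs - x‖ ‖x - xd‖ := by simpa [lt_max_iff] using h2
      refine ⟨?_, h1, h3⟩
      -- max ≤ ‖x - w‖ + d
      have hax : ‖xs - x‖ ≤ d + ‖x - w‖ := by
        calc ‖xs - x‖ = ‖(xs - w) - (x - w)‖ := by rw [show (xs - w) - (x - w) = xs - x by abel]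
        _ ≤ ‖xs - w‖ + ‖x - w‖ := norm_sub_le _ _
        _ = d + ‖x - w‖ := by rw [← hd]
      have hbx : ‖x - xd‖ ≤ d + ‖x - w‖ := by
        calc ‖x - xd‖ = ‖(x - w) - (xd - w)‖ := by rw [show (x - w) - (xd - w) = x - xd by abel]
        _ ≤ ‖x - w‖ + ‖xd - w‖ := norm_sub_le _ _
        _ = d + ‖x - w‖ := by rw [hxdw, norm_neg, ← hd]; ring
      rcases max_cases ‖xs - x‖ ‖x - xd‖ with ⟨hm, _⟩ | ⟨hm, _⟩ <;> rw [hm] at h3 <;> linarith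
  rw [hset, hmp.measure_preimage hSmeas.nullMeasurableSet]
  -- compute the measure of S
  have ht2 : t^2 ≤ τ^2 + d^2 := by
    have h := Real.sq_sqrt (by positivity : (0:ℝ) ≤ τ^2 + d^2)
    nlinarith [Real.sqrt_nonneg (τ^2+d^2)]
  have hsub : Metric.closedBall e t ∩ Metric.closedBall (-e) t ⊆ Metric.closedBall (0:EuclideanSpace ℝ (Fin 2)) τ := by
    rintro y ⟨h1, h2⟩
    rw [Metric.mem_closedBall, dist_zero_right]
    rw [Metric.mem_closedBall, dist_eq_norm] at h1 h2
    have hpar := parallelogram_law_with_norm ℝ y e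
    have h1' : ‖y - e‖ ≤ t := h1
    have h2' : ‖y + e‖ ≤ t := by rwa [sub_neg_eq_add] at h2
    have h1'' : ‖y - e‖ * ‖y - e‖ ≤ t * t :=
      mul_self_le_mul_self (norm_nonneg _) h1'
    have h2'' : ‖y + e‖ * ‖y + e‖ ≤ t * t :=
      mul_self_le_mul_self (norm_nonneg _) h2'
    rw [he] at hpar
    have hy2 : ‖y‖ ^ 2 ≤ t^2 - d^2 := by nlinarith
    nlinarith [norm_nonneg y, hy2, ht2, hτ]
  have hfin : volume (Metric.closedBall e t ∩ Metric.closedBall (-e) t) ≠ ⊤ := by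
    exact ((measure_mono Set.inter_subset_left).trans_lt (measure_closedBall_lt_top)).ne
  rw [hSdef, measure_diff hsub
    ((Metric.isClosed_closedBall.measurableSet.inter Metric.isClosed_closedBall.measurableSet).nullMeasurableSet)
    hfin]
  -- the two volumes
  have hball : volume (Metric.closedBall (0:EuclideanSpace ℝ (Fin 2)) τ)
      = ENNReal.ofReal (π * τ^2) := by
    rw [EuclideanSpace.volume_closedBall]
    simp only [Fintype.card_fin]
    rw [show ((2:ℕ):ℝ)/2 + 1 = 2 by norm_num, Real.Gamma_two]
    rw [show Real.sqrt π ^ 2 / 1 = π by rw [Real.sq_sqrt pi_nonneg]; ring]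
    rw [← ENNReal.ofReal_pow hτ.le, ← ENNReal.ofReal_mul (by positivity)]
    congr 1
    ring
  rw [hball, lens_volume_euclidean d t hdpos hdt e he0 he1]
  -- final arithmetic
  have hJ : 0 ≤ ∫ u in d..t, Real.sqrt (t^2 - u^2) :=
    intervalIntegral.integral_nonneg hdt.le (fun u _ => Real.sqrt_nonneg _)
  rw [integral_sqrt_aux t d hdpos hdt] at hJ
  have hL0 : 0 ≤ π * t^2 - 2*d*Real.sqrt (t^2 - d^2) - 2*t^2*Real.arcsin (d/t) := by linarith
  rw [← ENNReal.ofReal_sub _ hL0]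
  congr 1
  have harc : Real.arcsin (d/t) = Real.arctan (d / Real.sqrt (t^2 - d^2)) := by
    rw [Real.arcsin_eq_arctan]
    · congr 1
      rw [show 1 - (d/t)^2 = (t^2 - d^2)/t^2 by field_simp,
        Real.sqrt_div (by nlinarith : (0:ℝ) ≤ t^2 - d^2), Real.sqrt_sq ht.le]
      have hs : Real.sqrt (t^2 - d^2) ≠ 0 := by
        refine ne_of_gt (Real.sqrt_pos.mpr ?_)
        nlinarith
      field_simp
    · constructor
      · have : 0 < d/t := div_pos hdpos ht
        linarith
      · exact (div_lt_one ht).mpr hdt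
  rw [harc]
  ring
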